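/- Let a : Fin m → {-1, 0, 1}, w₀ a probability vector with W⁺ = w₀{aᵢ=1}, W⁻ = w₀{aᵢ=-1} > 0, W⁰ = w₀{aᵢ=0} ∈ (0,1). Define Z(t) = W⁺e^{-t} + W⁻e^{t} + W⁰, α(t) = e^{-t}/Z(t), β(t) = 1/Z(t). Then for all t, W⁺·α(t)² + W⁰·α(t)·β(t) + W⁻·β(t)² - α(t) = 0. -/

import Mathlib

theorem stmt14 (m : ℕ) (a w0 : Fin m → ℝ)
    (ha : ∀ i, a i = 1 ∨ a i = 0 ∨ a i = -1)
    (hw0 : ∀ i, 0 ≤ w0 i) (hw0sum : ∑ i, w0 i = 1)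
    (Wp Wm W0 : ℝ)
    (hWp : Wp = ∑ i ∈ Finset.univ.filter (fun i => a i = 1), w0 i)
    (hWm : Wm = ∑ i ∈ Finset.univ.filter (fun i => a i = -1), w0 i)
    (hW0 : W0 = ∑ i ∈ Finset.univ.filter (fun i => a i = 0), w0 i)
    (hWmpos : 0 < Wm) (hW0mem : W0 ∈ Set.Ioo (0 : ℝ) 1)
    (Z α β : ℝ → ℝ)
    (hZ : ∀ t, Z t = Wp * Real.exp (-t) + Wm * Real.exp t + W0)
    (hα : ∀ t, α t = Real.exp (-t) / Z t)
    (hβ : ∀ t, β t = 1 / Z t) :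
    ∀ t, Wp * α t ^ 2 + W0 * α t * β t + Wm * β t ^ 2 - α t = 0 := by
  intro t
  have hWpnn : 0 ≤ Wp := by
    rw [hWp]; exact Finset.sum_nonneg fun i _ => hw0 i
  have hZpos : 0 < Z t := by
    rw [hZ]
    have := Real.exp_pos t
    have := Real.exp_pos (-t)
    nlinarith [hW0mem.1, mul_nonneg hWpnn (Real.exp_pos (-t)).le]
  have hZne : Z t ≠ 0 := ne_of_gt hZpos
  rw [hα, hβ]
  have he : Real.exp (-t) * Real.exp t = 1 := by
    rw [← Real.exp_add]; simp
  have key : Real.exp (-t) * Z t = Wp * Real.exp (-t) ^ 2 + W0 * Real.exp (-t) + Wm := by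
    rw [hZ]; linear_combination Wm * he
  field_simp
  linear_combination (-1) * key
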